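/- Let H⁰ and H¹ be inner product spaces and suppose U⁰ ⊆ H⁰, U¹ ⊆ H¹ are finite-dimensional subspaces of a graded space H = H⁰ ⊕ H¹ with grading involution ε (ε = id on H⁰, ε = −id on H¹) such that U⁰ ⊥ U¹. Then the assignments φ ↦ A_φ := {u + φ(u) : u ∈ U⁰} and A ↦ φ_A (defined by φ_A(a + εa) = a − εa) are mutually inverse bijections between the set of isometric isomorphisms φ : U⁰ → U¹ and the set of subspaces A ⊆ U⁰ ⊕ U¹ satisfying A ⊥ εA and U⁰ ⊕ U¹ = A ⊕ εA. -/

import Mathlib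

/-- Graphs of isometries vs. Lagrangian-type subspaces: for finite-dimensional
`U⁰ ⊆ H^even`, `U¹ ⊆ H^odd` with `U⁰ ⊥ U¹`, the assignment
`φ ↦ A_φ = {u + φ(u)}` is a bijection (with inverse `A ↦ φ_A`,
`φ_A(a + εa) = a − εa`) between isometric isomorphisms `φ : U₀ → U¹` and
subspaces `A ⊆ U⁰ ⊕ U¹` with `A ⊥ εA` and `U⁰ ⊕ U¹ = A ⊕ εA`. -/
theorem graphs_of_isometries_are_transversal_subspaces
    {H : Type*} [NormedAddCommGroup H] [InnerProductSpace ℝ H]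
    (ε : H ≃ₗᵢ[ℝ] H) (hinv : ∀ x, ε (ε x) = x)
    (U₀ U₁ : Submodule ℝ H)
    [FiniteDimensional ℝ U₀] [FiniteDimensional ℝ U₁]
    (hfix : ∀ u ∈ U₀, ε u = u)
    (hneg : ∀ u ∈ U₁, ε u = -u)
    (hperp : ∀ u ∈ U₀, ∀ v ∈ U₁, (inner ℝ u v : ℝ) = 0) :
    let Graph : (U₀ ≃ₗᵢ[ℝ] U₁) → Submodule ℝ H := fun φ =>
      LinearMap.range (U₀.subtype + U₁.subtype ∘ₗ φ.toLinearEquiv.toLinearMap)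
    let Good : Submodule ℝ H → Prop := fun A =>
      A ≤ U₀ ⊔ U₁ ∧
      (∀ a ∈ A, ∀ b ∈ A, (inner ℝ a (ε b) : ℝ) = 0) ∧
      (∀ x ∈ U₀ ⊔ U₁, ∃ a ∈ A, ∃ b ∈ A, x = a + ε b)
    -- `φ ↦ A_φ` lands in the good subspaces,
    (∀ φ : U₀ ≃ₗᵢ[ℝ] U₁, Good (Graph φ)) ∧
    -- it is a bijection onto them (the inverse being `A ↦ φ_A`),
    (∀ A : Submodule ℝ H, Good A → ∃! φ : U₀ ≃ₗᵢ[ℝ] U₁, Graph φ = A) ∧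
    -- and for `a = u + φ(u) ∈ A_φ` one has `a + εa = 2u`, `a − εa = 2φ(u)`,
    -- i.e. `φ_{A_φ}(a + εa) = a − εa` recovers `φ`.
    (∀ (φ : U₀ ≃ₗᵢ[ℝ] U₁) (u : U₀),
      ((u : H) + (φ u : H)) + ε ((u : H) + (φ u : H)) = (2 : ℝ) • (u : H) ∧
      ((u : H) + (φ u : H)) - ε ((u : H) + (φ u : H)) = (2 : ℝ) • (φ u : H)) := by
  intro Graph Good
  have hmemGraph : ∀ (φ : U₀ ≃ₗᵢ[ℝ] U₁) (x : H),
      x ∈ Graph φ ↔ ∃ u : U₀, (u : H) + (φ u : H) = x := by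
    intro φ x
    simp only [Graph, LinearMap.mem_range, LinearMap.add_apply, Submodule.coe_subtype,
      LinearMap.coe_comp, Function.comp_apply]
    rfl
  have hU01 : ∀ x, x ∈ U₀ → x ∈ U₁ → x = 0 := by
    intro x h0 h1
    exact inner_self_eq_zero.mp (hperp x h0 x h1)
  have hεadd : ∀ (u : U₀) (v : U₁), ε ((u:H) + (v:H)) = (u:H) - (v:H) := by
    intro u v
    rw [map_add, hfix _ u.2, hneg _ v.2, sub_eq_add_neg]
  refine ⟨?_, ?_, ?_⟩
  · -- Graph φ is Good
    intro φ
    refine ⟨?_, ?_, ?_⟩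
    · rintro x hx
      obtain ⟨u, rfl⟩ := (hmemGraph φ x).mp hx
      exact add_mem (Submodule.mem_sup_left u.2) (Submodule.mem_sup_right (φ u).2)
    · intro a ha b hb
      obtain ⟨u, rfl⟩ := (hmemGraph φ a).mp ha
      obtain ⟨v, rfl⟩ := (hmemGraph φ b).mp hb
      rw [hεadd v (φ v)]
      have h1 : (inner ℝ (u:H) ((φ v : H)) : ℝ) = 0 := hperp _ u.2 _ (φ v).2
      have h2 : (inner ℝ ((φ u : H)) ((v:H)) : ℝ) = 0 := by
        rw [real_inner_comm]; exact hperp _ v.2 _ (φ u).2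
      have h3 : (inner ℝ ((φ u : H)) ((φ v : H)) : ℝ) = (inner ℝ (u:H) (v:H) : ℝ) := by
        rw [← Submodule.coe_inner, ← Submodule.coe_inner, φ.inner_map_map]
      rw [inner_add_left, inner_sub_right, inner_sub_right]
      linarith [h1, h2, h3]
    · intro x hx
      obtain ⟨u, hu, v, hv, rfl⟩ := Submodule.mem_sup.mp hx
      set w : U₀ := φ.symm ⟨v, hv⟩ with hw
      have hφw : ((φ w : H)) = v := by rw [hw, φ.apply_symm_apply]
      refine ⟨(2⁻¹ : ℝ) • (((⟨u, hu⟩ : U₀) : H) + (φ ⟨u, hu⟩ : H) + ((w : H) + (φ w : H))),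
        ?_, (2⁻¹ : ℝ) • (((⟨u, hu⟩ : U₀) : H) + (φ ⟨u, hu⟩ : H) - ((w : H) + (φ w : H))), ?_, ?_⟩
      · exact Submodule.smul_mem _ _ (add_mem ((hmemGraph φ _).mpr ⟨_, rfl⟩)
          ((hmemGraph φ _).mpr ⟨_, rfl⟩))
      · exact Submodule.smul_mem _ _ (sub_mem ((hmemGraph φ _).mpr ⟨_, rfl⟩)
          ((hmemGraph φ _).mpr ⟨_, rfl⟩))
      · rw [map_smul, map_sub, hεadd ⟨u, hu⟩ (φ ⟨u, hu⟩), hεadd w (φ w)]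
        rw [← hφw]
        module
  · -- bijectivity
    intro A hA
    obtain ⟨hAle, hAorth, hAsurj⟩ := hA
    -- decomposition facts
    have hdec : ∀ a : A, (a:H) + ε a ∈ U₀ ∧ (a:H) - ε a ∈ U₁ := by
      intro a
      obtain ⟨u, hu, v, hv, huv⟩ := Submodule.mem_sup.mp (hAle a.2)
      have hεa : ε (a:H) = u - v := by
        rw [← huv, map_add, hfix u hu, hneg v hv, sub_eq_add_neg]
      constructor
      · rw [hεa, ← huv]
        have : (u + v) + (u - v) = (2:ℝ) • u := by module
        rw [this]; exact U₀.smul_mem _ hu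
      · rw [hεa, ← huv]
        have : (u + v) - (u - v) = (2:ℝ) • v := by module
        rw [this]; exact U₁.smul_mem _ hv
    -- the linear maps p and q
    set pL : A →ₗ[ℝ] H :=
      (2⁻¹ : ℝ) • (A.subtype + ε.toLinearEquiv.toLinearMap ∘ₗ A.subtype) with hpL
    set qL : A →ₗ[ℝ] H :=
      (2⁻¹ : ℝ) • (A.subtype - ε.toLinearEquiv.toLinearMap ∘ₗ A.subtype) with hqL
    have hpLa : ∀ a : A, pL a = (2⁻¹ : ℝ) • ((a:H) + ε a) := fun a => rfl
    have hqLa : ∀ a : A, qL a = (2⁻¹ : ℝ) • ((a:H) - ε a) := fun a => rfl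
    set p : A →ₗ[ℝ] U₀ := LinearMap.codRestrict U₀ pL
      (fun a => by rw [hpLa]; exact U₀.smul_mem _ (hdec a).1) with hp
    set q : A →ₗ[ℝ] U₁ := LinearMap.codRestrict U₁ qL
      (fun a => by rw [hqLa]; exact U₁.smul_mem _ (hdec a).2) with hq
    have hpa : ∀ a : A, ((p a : H)) = (2⁻¹ : ℝ) • ((a:H) + ε a) := fun a => rfl
    have hqa : ∀ a : A, ((q a : H)) = (2⁻¹ : ℝ) • ((a:H) - ε a) := fun a => rfl
    have hpq : ∀ a : A, ((p a : H)) + ((q a : H)) = (a : H) := by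
      intro a; rw [hpa, hqa]; module
    have horthself : ∀ a b : A, (inner ℝ (a:H) (ε (b:H)) : ℝ) = 0 :=
      fun a b => hAorth _ a.2 _ b.2
    -- injectivity of p
    have hpinj : Function.Injective p := by
      intro a b hab
      have h : (a:H) + ε a = (b:H) + ε b := by
        have := congrArg (Subtype.val) hab
        rw [hpa, hpa] at this
        have h2 := congrArg (fun z => (2:ℝ) • z) this
        simpa [smul_smul] using h2
      set c : A := a - b with hc
      have hcc : (c:H) + ε (c:H) = 0 := by
        simp only [hc, Submodule.coe_sub, map_sub]
        rw [sub_add_sub_comm, h, sub_self]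
      have : (inner ℝ (c:H) (c:H) : ℝ) = 0 := by
        have h1 : (inner ℝ (c:H) (ε (c:H)) : ℝ) = 0 := horthself c c
        have h2 : ε (c:H) = -(c:H) := by linear_combination (norm := module) hcc
        rw [h2, inner_neg_right] at h1
        linarith
      have : (c:H) = 0 := inner_self_eq_zero.mp this
      have : c = 0 := Subtype.ext this
      rwa [hc, sub_eq_zero] at this
    -- injectivity of q
    have hqinj : Function.Injective q := by
      intro a b hab
      have h : (a:H) - ε a = (b:H) - ε b := by
        have := congrArg (Subtype.val) hab
        rw [hqa, hqa] at this
        have h2 := congrArg (fun z => (2:ℝ) • z) this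
        simpa [smul_smul] using h2
      set c : A := a - b with hc
      have hcc : (c:H) - ε (c:H) = 0 := by
        simp only [hc, Submodule.coe_sub, map_sub]
        rw [sub_sub_sub_comm, h, sub_self]
      have : (inner ℝ (c:H) (c:H) : ℝ) = 0 := by
        have h1 : (inner ℝ (c:H) (ε (c:H)) : ℝ) = 0 := horthself c c
        have h2 : ε (c:H) = (c:H) := by linear_combination (norm := module) -hcc
        rw [h2] at h1
        linarith
      have : (c:H) = 0 := inner_self_eq_zero.mp this
      have : c = 0 := Subtype.ext this
      rwa [hc, sub_eq_zero] at this
    -- surjectivity of p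
    have hpsurj : Function.Surjective p := by
      intro u
      obtain ⟨a, ha, b, hb, hab⟩ := hAsurj (u:H) (Submodule.mem_sup_left u.2)
      have hεu : ε (u:H) = (u:H) := hfix _ u.2
      have h2 : (u:H) = ε a + b := by
        have := congrArg ε hab
        rw [hεu, map_add, hinv] at this
        exact this
      refine ⟨⟨a + b, add_mem ha hb⟩, ?_⟩
      apply Subtype.ext
      rw [hpa]
      simp only
      rw [map_add]
      have : (2⁻¹:ℝ) • ((a + b) + (ε a + ε b)) = (2⁻¹:ℝ) • ((a + ε b) + (ε a + b)) := by module
      rw [this, ← hab, ← h2]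
      module
    -- surjectivity of q
    have hqsurj : Function.Surjective q := by
      intro v
      obtain ⟨a, ha, b, hb, hab⟩ := hAsurj (v:H) (Submodule.mem_sup_right v.2)
      have hεv : ε (v:H) = -(v:H) := hneg _ v.2
      have h2 : -(v:H) = ε a + b := by
        have := congrArg ε hab
        rw [hεv, map_add, hinv] at this
        exact this
      refine ⟨⟨a - b, sub_mem ha hb⟩, ?_⟩
      apply Subtype.ext
      rw [hqa]
      simp only
      rw [map_sub]
      have : (2⁻¹:ℝ) • ((a - b) - (ε a - ε b)) = (2⁻¹:ℝ) • ((a + ε b) - (ε a + b)) := by module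
      rw [this, ← hab, ← h2]
      module
    -- inner products
    have hinnerp : ∀ a b : A, (inner ℝ ((p a : H)) ((p b : H)) : ℝ)
        = (2⁻¹:ℝ) * (inner ℝ (a:H) (b:H) : ℝ) := by
      intro a b
      rw [hpa, hpa, real_inner_smul_left, real_inner_smul_right]
      rw [inner_add_left, inner_add_right, inner_add_right]
      have h1 : (inner ℝ (a:H) (ε (b:H)) : ℝ) = 0 := horthself a b
      have h2 : (inner ℝ (ε (a:H)) ((b:H)) : ℝ) = 0 := by
        rw [real_inner_comm]; exact horthself b a
      have h3 : (inner ℝ (ε (a:H)) (ε (b:H)) : ℝ) = inner ℝ (a:H) (b:H) := ε.inner_map_map _ _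
      rw [h1, h2, h3]; ring
    have hinnerq : ∀ a b : A, (inner ℝ ((q a : H)) ((q b : H)) : ℝ)
        = (2⁻¹:ℝ) * (inner ℝ (a:H) (b:H) : ℝ) := by
      intro a b
      rw [hqa, hqa, real_inner_smul_left, real_inner_smul_right]
      rw [inner_sub_left, inner_sub_right, inner_sub_right]
      have h1 : (inner ℝ (a:H) (ε (b:H)) : ℝ) = 0 := horthself a b
      have h2 : (inner ℝ (ε (a:H)) ((b:H)) : ℝ) = 0 := by
        rw [real_inner_comm]; exact horthself b a
      have h3 : (inner ℝ (ε (a:H)) (ε (b:H)) : ℝ) = inner ℝ (a:H) (b:H) := ε.inner_map_map _ _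
      rw [h1, h2, h3]; ring
    -- build the isometry
    set eP : A ≃ₗ[ℝ] U₀ := LinearEquiv.ofBijective p ⟨hpinj, hpsurj⟩ with heP
    set eQ : A ≃ₗ[ℝ] U₁ := LinearEquiv.ofBijective q ⟨hqinj, hqsurj⟩ with heQ
    have hePa : ∀ a : A, eP a = p a := fun a => rfl
    have heQa : ∀ a : A, eQ a = q a := fun a => rfl
    set φlin : U₀ ≃ₗ[ℝ] U₁ := eP.symm.trans eQ with hφlin
    have hφlinval : ∀ u : U₀, φlin u = q (eP.symm u) := fun u => rfl
    have hφinner : ∀ x y : U₀, (inner ℝ (φlin x) (φlin y) : ℝ) = inner ℝ x y := by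
      intro x y
      have hx : p (eP.symm x) = x := by
        have := eP.apply_symm_apply x
        rwa [hePa] at this
      have hy : p (eP.symm y) = y := by
        have := eP.apply_symm_apply y
        rwa [hePa] at this
      rw [Submodule.coe_inner, Submodule.coe_inner, hφlinval, hφlinval, hinnerq,
        ← hinnerp, hx, hy]
    set φ : U₀ ≃ₗᵢ[ℝ] U₁ := φlin.isometryOfInner hφinner with hφ
    have hφval : ∀ u : U₀, φ u = φlin u := fun u => rfl
    -- key: for u, u + φ u = eP.symm u as element of H
    have hkey : ∀ u : U₀, (u : H) + (φ u : H) = ((eP.symm u : A) : H) := by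
      intro u
      rw [hφval, hφlinval]
      have hx : p (eP.symm u) = u := by
        have := eP.apply_symm_apply u
        rwa [hePa] at this
      have h := hpq (eP.symm u)
      rw [hx] at h
      exact h
    refine ⟨φ, ?_, ?_⟩
    · apply le_antisymm
      · intro x hx
        obtain ⟨u, rfl⟩ := (hmemGraph φ x).mp hx
        rw [hkey u]
        exact (eP.symm u).2
      · intro a ha
        rw [hmemGraph φ]
        refine ⟨eP ⟨a, ha⟩, ?_⟩
        rw [hkey, LinearEquiv.symm_apply_apply]
    · intro φ' hφ'A
      have hGG : Graph φ' = Graph φ := by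
        rw [hφ'A]
        apply le_antisymm
        · intro a ha
          rw [hmemGraph φ]
          refine ⟨eP ⟨a, ha⟩, ?_⟩
          rw [hkey, LinearEquiv.symm_apply_apply]
        · intro x hx
          obtain ⟨u, rfl⟩ := (hmemGraph φ x).mp hx
          rw [hkey u]
          exact (eP.symm u).2
      apply LinearIsometryEquiv.ext
      intro u
      have hmem : (u : H) + (φ' u : H) ∈ Graph φ := by
        rw [← hGG, hmemGraph φ']
        exact ⟨u, rfl⟩
      obtain ⟨w, hw⟩ := (hmemGraph φ _).mp hmem
      have hsub : (u : H) - (w : H) = (φ w : H) - (φ' u : H) := by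
        linear_combination (norm := module) hw.symm
      have h0 : (u : H) - (w : H) = 0 := by
        apply hU01
        · exact sub_mem u.2 w.2
        · rw [hsub]; exact sub_mem (φ w).2 (φ' u).2
      have huw : w = u := by
        apply Subtype.ext
        have := sub_eq_zero.mp h0
        exact this.symm
      have : (φ w : H) = (φ' u : H) := by
        rw [hsub] at h0
        exact sub_eq_zero.mp h0
      rw [huw] at this
      exact Subtype.ext this.symm
  · -- the recovery formulas
    intro φ u
    rw [hεadd u (φ u)]
    constructor
    · module
    · module
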